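/- arXiv:2302.08311 — 2 statements merged into one kernel-verified Lean document; each statement's English description precedes it below -/
import Mathlib

section
/- Let α ∈ (-1,∞). Suppose F: ℝ → ℂ is 2π-periodic and absolutely continuous on compact intervals with a.e. derivative Ḟ (so Ḟ ∈ L¹(T)), and let f = K_α[F] on D. Then for every r ∈ [0,1) and every θ ∈ ℝ, the angular derivative satisfies ∂_θ f(re^{iθ}) = (1/(2π))∫₀^{2π} K_α(re^{i(θ-t)}) Ḟ(t) dt. -/
open MeasureTheory Real Complex Filter Set
open scoped ENNReal Topology NNReal

noncomputable section

/-- The open unit disk in `ℂ`. -/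
def unitDisk : Set ℂ := Metric.ball 0 1

/-- The constant `C_α = Γ(1+α/2)² / Γ(1+α)`. -/
def Cconst (α : ℝ) : ℝ := Real.Gamma (1 + α / 2) ^ 2 / Real.Gamma (1 + α)

/-- The Poisson type kernel `K_α(z) = C_α (1-|z|²)^{α+1} / |1-z|^{α+2}`. -/
def Kker (α : ℝ) (z : ℂ) : ℝ :=
  Cconst α * (1 - ‖z‖ ^ 2) ^ (α + 1) / ‖1 - z‖ ^ (α + 2)

/-- The Poisson type integral `K_α[F](z) = (1/2π) ∫₀^{2π} K_α(z e^{-it}) F(t) dt`. -/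
def poissonInt (α : ℝ) (F : ℝ → ℂ) (z : ℂ) : ℂ :=
  (1 / (2 * π)) * ∫ t in (0:ℝ)..(2 * π),
    ((Kker α (z * Complex.exp (-(t : ℂ) * Complex.I)) : ℝ) : ℂ) * F t

/-- `polar r θ = r e^{iθ}`. -/
def polar (r θ : ℝ) : ℂ := (r : ℂ) * Complex.exp ((θ : ℂ) * Complex.I)

/-- The Wirtinger derivative `∂_z f = (f_x - i f_y)/2`. -/
def pderivZ (f : ℂ → ℂ) (z : ℂ) : ℂ :=
  (fderiv ℝ f z 1 - Complex.I * fderiv ℝ f z Complex.I) / 2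

/-- The Wirtinger derivative `∂_{z̄} f = (f_x + i f_y)/2`. -/
def pderivZbar (f : ℂ → ℂ) (z : ℂ) : ℂ :=
  (fderiv ℝ f z 1 + Complex.I * fderiv ℝ f z Complex.I) / 2

/-- The radial derivative `∂_r f(re^{iθ})`, as a function of the polar coordinates. -/
def radialDeriv (f : ℂ → ℂ) (r θ : ℝ) : ℂ :=
  deriv (fun s : ℝ => f (polar s θ)) r

/-- The radial derivative `∂_r f(z)`, as a function of `z`. -/
def radialDerivFun (f : ℂ → ℂ) (z : ℂ) : ℂ :=
  radialDeriv f (‖z‖) (Complex.arg z)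

/-- The angular derivative `∂_θ f(re^{iθ})`, as a function of the polar coordinates. -/
def angularDeriv (f : ℂ → ℂ) (r θ : ℝ) : ℂ :=
  deriv (fun φ : ℝ => f (polar r φ)) θ

/-- The integral mean `M_p(h) = ((1/2π)∫₀^{2π} |h(θ)|^p dθ)^{1/p}` over the circle,
with the sup for `p = ∞`. -/
def circMean (p : ℝ≥0∞) (h : ℝ → ℂ) : ℝ≥0∞ :=
  if p = ∞ then ⨆ θ : ℝ, (‖h θ‖₊ : ℝ≥0∞)
  else ((∫⁻ θ in Set.Ioc (0:ℝ) (2 * π), (‖h θ‖₊ : ℝ≥0∞) ^ p.toReal) /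
      ENNReal.ofReal (2 * π)) ^ (1 / p.toReal)

/-- The Hardy type norm `‖g‖_{H^p_G(D)} = sup_{0 ≤ r < 1} M_p(r, g)` of a function `g`
given in polar coordinates `(r, θ)`. -/
def hardyNorm (p : ℝ≥0∞) (g : ℝ → ℝ → ℂ) : ℝ≥0∞ :=
  ⨆ r ∈ Set.Ico (0:ℝ) 1, circMean p (g r)

/-- The Bergman type norm `‖g‖_{B^p_G(D)} = (∫_D |g|^p dσ)^{1/p}` with `dσ` the normalized
area measure on the unit disk; essential sup for `p = ∞`. -/
def bergmanNorm (p : ℝ≥0∞) (g : ℂ → ℂ) : ℝ≥0∞ :=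
  if p = ∞ then essSup (fun z => (‖g z‖₊ : ℝ≥0∞)) (volume.restrict unitDisk)
  else ((∫⁻ z in unitDisk, (‖g z‖₊ : ℝ≥0∞) ^ p.toReal) / ENNReal.ofReal π) ^ (1 / p.toReal)

/-- The `L^p` norm of a (`2π`-periodic) function on the circle. -/
def circleLp (p : ℝ≥0∞) (F : ℝ → ℂ) : ℝ≥0∞ :=
  if p = ∞ then essSup (fun θ => (‖F θ‖₊ : ℝ≥0∞)) volume
  else ((∫⁻ θ in Set.Ioc (0:ℝ) (2 * π), (‖F θ‖₊ : ℝ≥0∞) ^ p.toReal) /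
      ENNReal.ofReal (2 * π)) ^ (1 / p.toReal)

/-- `F` is `2π`-periodic and absolutely continuous on compact intervals with a.e. derivative
`F'`; this is encoded, equivalently, by the fundamental theorem of calculus: `F'` is locally
integrable and `F` is the indefinite integral of `F'`. -/
def PeriodicAC (F F' : ℝ → ℂ) : Prop :=
  Function.Periodic F (2 * π) ∧
  (∀ a b : ℝ, IntervalIntegrable F' volume a b) ∧
  (∀ θ : ℝ, F θ = F 0 + ∫ t in (0:ℝ)..θ, F' t)

/-- `F` belongs to `L^p` of the circle. -/
def MemLpT (p : ℝ≥0∞) (F : ℝ → ℂ) : Prop :=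
  AEStronglyMeasurable F volume ∧ circleLp p F < ∞

/-- `‖D_f(z)‖ = |∂_z f(z)| + |∂_{z̄} f(z)|`. -/
def Dnorm (f : ℂ → ℂ) (z : ℂ) : ℝ :=
  ‖pderivZ f z‖ + ‖pderivZbar f z‖

/-- The Jacobian `J_f(z) = |∂_z f(z)|² - |∂_{z̄} f(z)|²`. -/
def jacobian (f : ℂ → ℂ) (z : ℂ) : ℝ :=
  ‖pderivZ f z‖ ^ 2 - ‖pderivZbar f z‖ ^ 2

/-- `f` is a (sense-preserving) `(K,K')`-elliptic mapping of the unit disk. -/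
def IsElliptic (K K' : ℝ) (f : ℂ → ℂ) : Prop :=
  ContinuousOn f unitDisk ∧
  (∀ᵐ z ∂(volume.restrict unitDisk), 0 < jacobian f z) ∧
  (∀ᵐ z ∂(volume.restrict unitDisk), Dnorm f z ^ 2 ≤ K * jacobian f z + K')


lemma polar_mul_exp (r φ t : ℝ) :
    polar r φ * Complex.exp (-(t : ℂ) * Complex.I) = polar r (φ - t) := by
  unfold polar
  rw [mul_assoc, ← Complex.exp_add]
  have : (φ : ℂ) * Complex.I + -(t : ℂ) * Complex.I = ((φ - t : ℝ) : ℂ) * Complex.I := by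
    push_cast; ring
  rw [this]

lemma polar_add_two_pi (r s : ℝ) : polar r (s + 2 * π) = polar r s := by
  unfold polar
  have : ((s + 2 * π : ℝ) : ℂ) * Complex.I
      = (s : ℂ) * Complex.I + 2 * (π : ℂ) * Complex.I := by push_cast; ring
  simp only [this, Complex.exp_add, Complex.exp_two_pi_mul_I, mul_one]

lemma abs_polar (r : ℝ) (hr0 : 0 ≤ r) (s : ℝ) : ‖polar r s‖ = r := by
  unfold polar
  rw [norm_mul, Complex.norm_real, Complex.norm_exp_ofReal_mul_I, mul_one,
    Real.norm_eq_abs, _root_.abs_of_nonneg hr0]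


/-- For `α ∈ (-1,∞)` and a `2π`-periodic absolutely continuous `F` with a.e.
derivative `F'`, the Poisson type integral `f = K_α[F]` satisfies, for every `0 ≤ r < 1` and
every `θ`, `∂_θ f(re^{iθ}) = (1/2π) ∫₀^{2π} K_α(re^{i(θ-t)}) Ḟ(t) dt`. -/
theorem stmt1 (α : ℝ) (hα : -1 < α) (F F' : ℝ → ℂ) (hF : PeriodicAC F F')
    (r : ℝ) (hr0 : 0 ≤ r) (hr1 : r < 1) (θ : ℝ) :
    HasDerivAt (fun φ : ℝ => poissonInt α F (polar r φ))
      ((1 / (2 * π)) * ∫ t in (0:ℝ)..(2 * π), ((Kker α (polar r (θ - t)) : ℝ) : ℂ) * F' t)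
      θ := by
  obtain ⟨hper, hint, hftc⟩ := hF
  have hπ : (0:ℝ) < π := Real.pi_pos
  have h2 : (0:ℝ) < 2 * π := by linarith
  have hr1' : (0:ℝ) < 1 - r := by linarith
  -- the kernel as a function on the circle
  set k : ℝ → ℝ := fun s => Kker α (polar r s) with hk
  set kc : ℝ → ℂ := fun s => ((k s : ℝ) : ℂ) with hkc
  have hden : ∀ s, 1 - r ≤ ‖1 - polar r s‖ := by
    intro s
    have h1 := norm_sub_norm_le (1 : ℂ) (polar r s)
    simpa [abs_polar r hr0 s] using h1
  have hdenpos : ∀ s, 0 < ‖1 - polar r s‖ := fun s => lt_of_lt_of_le hr1' (hden s)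
  have hkval : ∀ s, k s = Cconst α * (1 - r ^ 2) ^ (α + 1)
      / ‖1 - polar r s‖ ^ (α + 2) := by
    intro s
    simp only [hk, Kker, abs_polar r hr0 s]
  have hCpos : 0 < Cconst α := by
    unfold Cconst
    exact div_pos (pow_pos (Real.Gamma_pos_of_pos (by linarith)) 2)
      (Real.Gamma_pos_of_pos (by linarith))
  have hr2 : (0:ℝ) < 1 - r ^ 2 := by nlinarith
  have hknn : ∀ s, 0 ≤ k s := by
    intro s
    rw [hkval s]
    exact div_nonneg (mul_nonneg hCpos.le (Real.rpow_nonneg hr2.le _))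
      (Real.rpow_nonneg (norm_nonneg _) _)
  set M : ℝ := Cconst α * (1 - r ^ 2) ^ (α + 1) / (1 - r) ^ (α + 2) with hMdef
  have hM : ∀ s, |k s| ≤ M := by
    intro s
    rw [_root_.abs_of_nonneg (hknn s), hkval s, hMdef]
    apply div_le_div_of_nonneg_left (mul_nonneg hCpos.le (Real.rpow_nonneg hr2.le _))
      (Real.rpow_pos_of_pos hr1' _)
    exact Real.rpow_le_rpow hr1'.le (hden s) (by linarith)
  have hM0 : (0:ℝ) ≤ M := le_trans (abs_nonneg _) (hM 0)
  -- continuity of the kernel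
  have hpc : Continuous fun s : ℝ => polar r s := by
    unfold polar
    exact continuous_const.mul (Complex.continuous_exp.comp
      (Complex.continuous_ofReal.mul continuous_const))
  have habs1 : Continuous fun s => ‖1 - polar r s‖ :=
    continuous_norm.comp (continuous_const.sub hpc)
  have hkcont : Continuous k := by
    have hptw : Continuous fun s => Cconst α * (1 - r ^ 2) ^ (α + 1)
        / ‖1 - polar r s‖ ^ (α + 2) := by
      apply continuous_const.div
      · apply continuous_iff_continuousAt.mpr
        intro s
        exact (Real.continuousAt_rpow_const _ _ (Or.inr (by linarith))).comp
          habs1.continuousAt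
      · exact fun s => (Real.rpow_pos_of_pos (hdenpos s) _).ne'
    exact hptw.congr fun s => (hkval s).symm
  have hkcC : Continuous kc := Complex.continuous_ofReal.comp hkcont
  have hkcper : Function.Periodic kc (2 * π) := by
    intro s
    simp only [hkc, hk, polar_add_two_pi]
  -- primitive of kernel and of F'
  set L : ℝ → ℂ := fun x => ∫ s in (0:ℝ)..x, kc s with hL
  set A : ℝ → ℂ := fun t => ∫ u in (0:ℝ)..t, F' u with hA
  have hAcont : Continuous A := intervalIntegral.continuous_primitive hint 0
  have hL' : ∀ y, HasDerivAt L (kc y) y := fun y =>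
    intervalIntegral.integral_hasDerivAt_right (hkcC.intervalIntegrable 0 y)
      (hkcC.stronglyMeasurableAtFilter volume (𝓝 y)) hkcC.continuousAt
  have hLcont : Continuous L := continuous_iff_continuousAt.mpr fun y => (hL' y).continuousAt
  set c₀ : ℂ := ∫ s in (0:ℝ)..(2 * π), kc s with hc₀
  -- shift integral identities
  have hLL : ∀ c x y : ℝ, (∫ t in x..y, kc (c - t)) = L (c - x) - L (c - y) := by
    intro c x y
    rw [intervalIntegral.integral_comp_sub_left kc c]
    have h1 := intervalIntegral.integral_add_adjacent_intervals
      (hkcC.intervalIntegrable (μ := volume) 0 (c - y))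
      (hkcC.intervalIntegrable (μ := volume) (c - y) (c - x))
    simp only [hL]
    linear_combination h1
  have hc0 : ∀ c : ℝ, (∫ t in (0:ℝ)..(2 * π), kc (c - t)) = c₀ := by
    intro c
    rw [intervalIntegral.integral_comp_sub_left kc c]
    have h3 := hkcper.intervalIntegral_add_eq (c - 2 * π) 0
    simp only [sub_add_cancel, zero_add] at h3
    rw [sub_zero, hc₀]
    exact h3
  have hF'int : IntegrableOn F' (Ioc (0:ℝ) (2 * π)) := (hint 0 (2 * π)).1
  have hF'm : AEStronglyMeasurable F' (volume.restrict (Ioc (0:ℝ) (2 * π))) :=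
    hF'int.aestronglyMeasurable
  -- Fubini step
  have hswap : ∀ φ : ℝ, (∫ t in (0:ℝ)..(2 * π), kc (φ - t) * A t)
      = ∫ u in (0:ℝ)..(2 * π), F' u * (L (φ - u) - L (φ - 2 * π)) := by
    intro φ
    set μ0 := volume.restrict (Ioc (0:ℝ) (2 * π)) with hμ0
    set g : ℝ → ℝ → ℂ := fun t u => kc (φ - t) * (Ioc (0:ℝ) t).indicator F' u with hg
    have hgi : Integrable (Function.uncurry g) (μ0.prod μ0) := by
      have hSmeas : MeasurableSet {p : ℝ × ℝ | 0 < p.2 ∧ p.2 ≤ p.1} :=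
        (measurableSet_lt measurable_const measurable_snd).inter
          (measurableSet_le measurable_snd measurable_fst)
      have hind : (fun p : ℝ × ℝ => (Ioc (0:ℝ) p.1).indicator F' p.2)
          = ({p : ℝ × ℝ | 0 < p.2 ∧ p.2 ≤ p.1}).indicator (fun p => F' p.2) := by
        funext p
        by_cases h : 0 < p.2 ∧ p.2 ≤ p.1 <;>
          simp [Set.indicator_apply, Set.mem_Ioc, Set.mem_setOf_eq, h]
      have hm2 : AEStronglyMeasurable (fun p : ℝ × ℝ => F' p.2) (μ0.prod μ0) := hF'm.comp_snd
      have hcont1 : Continuous fun p : ℝ × ℝ => kc (φ - p.1) :=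
        hkcC.comp (continuous_const.sub continuous_fst)
      have hm : AEStronglyMeasurable (Function.uncurry g) (μ0.prod μ0) := by
        have := hcont1.aestronglyMeasurable.mul (hind ▸ hm2.indicator hSmeas)
        exact this
      have hdom : Integrable (fun p : ℝ × ℝ => M * ‖F' p.2‖) (μ0.prod μ0) :=
        (integrable_const M).mul_prod hF'int.norm
      refine hdom.mono' hm ?_
      filter_upwards with p
      simp only [Function.uncurry, hg, norm_mul]
      have h1 : ‖kc (φ - p.1)‖ ≤ M := by
        rw [hkc, Complex.norm_real, Real.norm_eq_abs]; exact hM _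
      exact mul_le_mul h1 (norm_indicator_le_norm_self F' p.2) (norm_nonneg _) hM0
    calc (∫ t in (0:ℝ)..(2 * π), kc (φ - t) * A t)
        = ∫ t in Ioc (0:ℝ) (2 * π), kc (φ - t) * A t := intervalIntegral.integral_of_le h2.le
      _ = ∫ t in Ioc (0:ℝ) (2 * π), ∫ u in Ioc (0:ℝ) (2 * π), g t u := by
          apply setIntegral_congr_fun measurableSet_Ioc
          intro t ht
          show kc (φ - t) * A t = ∫ u in Ioc (0:ℝ) (2 * π), g t u
          have hAeq : (∫ u in Ioc (0:ℝ) (2 * π), (Ioc (0:ℝ) t).indicator F' u) = A t := by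
            rw [setIntegral_indicator measurableSet_Ioc,
              Set.inter_eq_self_of_subset_right (Set.Ioc_subset_Ioc_right ht.2),
              hA, ← intervalIntegral.integral_of_le ht.1.le]
          rw [hg]
          simp only []
          rw [MeasureTheory.integral_const_mul, hAeq]
      _ = ∫ u in Ioc (0:ℝ) (2 * π), ∫ t in Ioc (0:ℝ) (2 * π), g t u :=
          integral_integral_swap hgi
      _ = ∫ u in Ioc (0:ℝ) (2 * π), F' u * (L (φ - u) - L (φ - 2 * π)) := by
          apply setIntegral_congr_fun measurableSet_Ioc
          intro u hu
          show (∫ t in Ioc (0:ℝ) (2 * π), g t u) = F' u * (L (φ - u) - L (φ - 2 * π))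
          have hcongr : (∫ t in Ioc (0:ℝ) (2 * π), g t u)
              = ∫ t in Ioc (0:ℝ) (2 * π), (Ici u).indicator (fun t => kc (φ - t) * F' u) t := by
            apply setIntegral_congr_fun measurableSet_Ioc
            intro t _
            by_cases h : u ≤ t
            · simp [hg, Set.indicator_apply, Set.mem_Ioc, Set.mem_Ici, hu.1, h]
            · simp [hg, Set.indicator_apply, Set.mem_Ioc, Set.mem_Ici, h]
          rw [hcongr, setIntegral_indicator measurableSet_Ici]
          have hset : Ioc (0:ℝ) (2 * π) ∩ Ici u = Icc u (2 * π) := by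
            ext t
            simp only [Set.mem_inter_iff, Set.mem_Ioc, Set.mem_Ici, Set.mem_Icc]
            constructor
            · rintro ⟨⟨_, h2'⟩, h3⟩; exact ⟨h3, h2'⟩
            · rintro ⟨h1', h2'⟩; exact ⟨⟨lt_of_lt_of_le hu.1 h1', h2'⟩, h1'⟩
          rw [hset, MeasureTheory.integral_Icc_eq_integral_Ioc,
            ← intervalIntegral.integral_of_le hu.2, intervalIntegral.integral_mul_const,
            hLL φ u (2 * π), mul_comm]
      _ = ∫ u in (0:ℝ)..(2 * π), F' u * (L (φ - u) - L (φ - 2 * π)) :=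
          (intervalIntegral.integral_of_le h2.le).symm
  -- total derivative of F' is zero
  have hF'sum : (∫ u in (0:ℝ)..(2 * π), F' u) = 0 := by
    have h1 := hftc (2 * π)
    have h2' := hper 0
    rw [zero_add] at h2'
    rw [h2'] at h1
    exact (left_eq_add.mp h1)
  -- key representation
  have key : ∀ φ : ℝ, poissonInt α F (polar r φ)
      = (1 / (2 * (π:ℂ))) * (F 0 * c₀ + ∫ u in (0:ℝ)..(2 * π), F' u * L (φ - u)) := by
    intro φ
    unfold poissonInt
    congr 1
    have step1 : (∫ t in (0:ℝ)..(2 * π),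
        ((Kker α (polar r φ * Complex.exp (-(t : ℂ) * Complex.I)) : ℝ) : ℂ) * F t)
        = ∫ t in (0:ℝ)..(2 * π), (kc (φ - t) * F 0 + kc (φ - t) * A t) := by
      apply intervalIntegral.integral_congr
      intro t _
      beta_reduce
      rw [polar_mul_exp, hftc t, show (∫ u in (0:ℝ)..t, F' u) = A t from rfl]
      simp only [hkc, hk]
      ring
    have hcont2 : Continuous fun t : ℝ => kc (φ - t) :=
      hkcC.comp (continuous_const.sub continuous_id)
    rw [step1, intervalIntegral.integral_add (f := fun t => kc (φ - t) * F 0) (g := fun t => kc (φ - t) * A t)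
        ((hcont2.mul continuous_const).intervalIntegrable _ _)
        ((hcont2.mul hAcont).intervalIntegrable _ _),
      intervalIntegral.integral_mul_const, hc0 φ, hswap φ]
    have expand : (∫ u in (0:ℝ)..(2 * π), F' u * (L (φ - u) - L (φ - 2 * π)))
        = (∫ u in (0:ℝ)..(2 * π), F' u * L (φ - u))
          - (∫ u in (0:ℝ)..(2 * π), F' u) * L (φ - 2 * π) := by
      have hLc2 : Continuous fun u : ℝ => L (φ - u) :=
        hLcont.comp (continuous_const.sub continuous_id)
      have i1 : IntervalIntegrable (fun u => F' u * L (φ - u)) volume 0 (2 * π) :=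
        (hint 0 (2 * π)).mul_continuousOn hLc2.continuousOn
      have i2 : IntervalIntegrable (fun u => F' u * L (φ - 2 * π)) volume 0 (2 * π) :=
        (hint 0 (2 * π)).mul_const _
      rw [← intervalIntegral.integral_mul_const, ← intervalIntegral.integral_sub i1 i2]
      apply intervalIntegral.integral_congr
      intro u _
      beta_reduce
      ring
    rw [expand, hF'sum, zero_mul, sub_zero, mul_comm c₀ (F 0)]
  -- differentiate under the integral sign
  have hmΙ : AEStronglyMeasurable F' (volume.restrict (Set.uIoc (0:ℝ) (2 * π))) := by
    rw [Set.uIoc_of_le h2.le]; exact hF'm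
  have hD : HasDerivAt (fun x : ℝ => ∫ u in (0:ℝ)..(2 * π), F' u * L (x - u))
      (∫ u in (0:ℝ)..(2 * π), F' u * kc (θ - u)) θ := by
    have := intervalIntegral.hasDerivAt_integral_of_dominated_loc_of_deriv_le
      (F := fun x u => F' u * L (x - u)) (F' := fun x u => F' u * kc (x - u)) (x₀ := θ)
      (bound := fun u => ‖F' u‖ * M) (a := 0) (b := 2 * π) (μ := volume) (s := Set.univ) Filter.univ_mem
      ?_ ?_ ?_ ?_ ?_ ?_
    · exact this.2
    · filter_upwards with x
      exact hmΙ.mul ((hLcont.comp (continuous_const.sub continuous_id)).aestronglyMeasurable)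
    · exact (hint 0 (2 * π)).mul_continuousOn
        ((hLcont.comp (continuous_const.sub continuous_id)).continuousOn)
    · exact hmΙ.mul ((hkcC.comp (continuous_const.sub continuous_id)).aestronglyMeasurable)
    · filter_upwards with u _ x _
      rw [norm_mul]
      apply mul_le_mul_of_nonneg_left _ (norm_nonneg _)
      rw [hkc, Complex.norm_real, Real.norm_eq_abs]; exact hM _
    · exact ((hint 0 (2 * π)).norm).mul_const M
    · filter_upwards with u _ x _
      have h2' : HasDerivAt (fun y : ℝ => L (y - u)) (kc (x - u)) x :=
        (hL' (x - u)).comp_sub_const x u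
      simpa using h2'.const_mul (F' u)
  have hG : HasDerivAt
      (fun x : ℝ => (1 / (2 * (π:ℂ))) * (F 0 * c₀ + ∫ u in (0:ℝ)..(2 * π), F' u * L (x - u)))
      ((1 / (2 * (π:ℂ))) * ∫ u in (0:ℝ)..(2 * π), F' u * kc (θ - u)) θ :=
    (hD.const_add (F 0 * c₀)).const_mul _
  have hfinal := hG.congr_of_eventuallyEq (Filter.Eventually.of_forall fun φ => (key φ))
  convert hfinal using 2
  · rfl
  rw [intervalIntegral.integral_congr (fun t _ => mul_comm
    (((Kker α (polar r (θ - t)) : ℝ) : ℂ)) (F' t))]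


end
end

section
/- Let α ∈ (-1,0), let n be a positive integer, and let f(z) = Σ_{k=0}^∞ a_{n,k} |z|^{2k} z^n on D, where a_{n,k} = ((-α/2)_k (n-α/2)_k)/((n+1)_k · k!) and (x)_k = x(x+1)⋯(x+k-1) is the rising factorial. Then for every K ≥ 1, the quantity ‖D_f(z)‖² - K·J_f(z) tends to +∞ as |z| → 1⁻; in particular, for every K ≥ 1 and K' ≥ 0 there exists z ∈ D with ‖D_f(z)‖² > K·J_f(z) + K', so f is not a (K,K')-elliptic mapping for any K ≥ 1 and K' ≥ 0. -/
open MeasureTheory Real Complex Filter Set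
open scoped ENNReal Topology NNReal

noncomputable section

/-- The rising factorial `(x)_k = x(x+1)⋯(x+k-1)`. -/
noncomputable def poch (x : ℝ) (k : ℕ) : ℝ := Polynomial.eval x (ascPochhammer ℝ k)

/-- `a_{n,k} = ((-α/2)_k (n-α/2)_k)/((n+1)_k k!)`. -/
noncomputable def coefA (α : ℝ) (n k : ℕ) : ℝ :=
  poch (-α / 2) k * poch ((n : ℝ) - α / 2) k / (poch ((n : ℝ) + 1) k * (Nat.factorial k))

/-- The mapping `f(z) = Σ_{k≥0} a_{n,k} |z|^{2k} z^n`. -/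
noncomputable def exF (α : ℝ) (n : ℕ) (z : ℂ) : ℂ :=
  ∑' k : ℕ, ((coefA α n k * ‖z‖ ^ (2 * k) : ℝ) : ℂ) * z ^ n


-- ## Auxiliary lemmas
section Aux17

lemma poch_succ (x : ℝ) (k : ℕ) : poch x (k+1) = poch x k * (x + k) := by
  simp [poch, ascPochhammer_succ_right]

lemma poch_pos {x : ℝ} (hx : 0 < x) (k : ℕ) : 0 < poch x k := by
  induction k with
  | zero => simp [poch]
  | succ k ih => rw [poch_succ]; positivity

variable {α : ℝ} {n : ℕ}

lemma coefA_pos (hα1 : -1 < α) (hα2 : α < 0) (hn : 0 < n) (k : ℕ) : 0 < coefA α n k := by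
  have h1 : 0 < -α/2 := by linarith
  have hn0 : (0:ℝ) < n := by exact_mod_cast hn
  have h2 : 0 < (n:ℝ) - α/2 := by linarith
  have h3 : 0 < (n:ℝ) + 1 := by positivity
  have := poch_pos h1 k; have := poch_pos h2 k; have := poch_pos h3 k
  have : (0:ℝ) < Nat.factorial k := by exact_mod_cast Nat.factorial_pos k
  unfold coefA; positivity

lemma coefA_zero : coefA α n 0 = 1 := by simp [coefA, poch]

lemma coefA_succ (hα1 : -1 < α) (hα2 : α < 0) (hn : 0 < n) (k : ℕ) :
    coefA α n (k+1) * (((n:ℝ) + 1 + k) * ((k:ℝ)+1)) =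
    coefA α n k * ((-α/2 + k) * ((n:ℝ) - α/2 + k)) := by
  have h3 : 0 < (n:ℝ) + 1 := by positivity
  have hp3 := poch_pos h3 k
  have hf : (0:ℝ) < Nat.factorial k := by exact_mod_cast Nat.factorial_pos k
  unfold coefA
  rw [poch_succ, poch_succ, poch_succ, Nat.factorial_succ]
  push_cast
  field_simp

lemma coefA_anti (hα1 : -1 < α) (hα2 : α < 0) (hn : 0 < n) (k : ℕ) :
    coefA α n (k+1) ≤ coefA α n k := by
  have hk := coefA_succ hα1 hα2 hn k
  have hA := coefA_pos hα1 hα2 hn k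
  have hA1 := coefA_pos hα1 hα2 hn (k+1)
  have hn0 : (1:ℝ) ≤ n := by exact_mod_cast hn
  have hk0 : (0:ℝ) ≤ k := Nat.cast_nonneg k
  have hq : (-α/2 + k) * ((n:ℝ) - α/2 + k) ≤ ((n:ℝ) + 1 + k) * ((k:ℝ)+1) := by nlinarith
  have hD : (0:ℝ) < ((n:ℝ) + 1 + k) * ((k:ℝ)+1) := by nlinarith
  nlinarith [mul_le_mul_of_nonneg_left hq hA.le]

lemma coefA_le_one (hα1 : -1 < α) (hα2 : α < 0) (hn : 0 < n) (k : ℕ) :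
    coefA α n k ≤ 1 := by
  induction k with
  | zero => rw [coefA_zero]
  | succ k ih => exact le_trans (coefA_anti hα1 hα2 hn k) ih

lemma coefA_summable (hα1 : -1 < α) (hα2 : α < 0) (hn : 0 < n) :
    Summable (coefA α n) := by
  have h1α : (0:ℝ) < 1 + α := by linarith
  set K₀ : ℕ := ⌈4*((n:ℝ)+1)/(1+α)⌉₊ with hK₀
  have key : ∀ k : ℕ, K₀ ≤ k →
      ((k:ℝ)+1) * coefA α n (k+1) + ((1+α)/2) * coefA α n k ≤ (k:ℝ) * coefA α n k := by
    intro k hk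
    have hkR : 4*((n:ℝ)+1)/(1+α) ≤ (k:ℝ) := le_trans (Nat.le_ceil _) (Nat.cast_le.mpr hk)
    have hkR' : 4*((n:ℝ)+1) ≤ (1+α) * k := by
      rw [div_le_iff₀ h1α] at hkR; linarith
    have hA := coefA_pos hα1 hα2 hn k
    have hrec := coefA_succ hα1 hα2 hn k
    have hn0 : (1:ℝ) ≤ n := by exact_mod_cast hn
    have hk0 : (0:ℝ) ≤ k := Nat.cast_nonneg k
    have hDpos : (0:ℝ) < (n:ℝ) + 1 + k := by linarith
    have hquad : (-α/2 + k) * ((n:ℝ) - α/2 + k) ≤ ((k:ℝ)+1-(3+α)/2) * ((n:ℝ)+1+k) := by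
      nlinarith [sq_nonneg α, sq_nonneg (α+1)]
    have h3 : (((k:ℝ)+1) * coefA α n (k+1)) * ((n:ℝ)+1+k) ≤
        ((((k:ℝ)+1-(3+α)/2)) * coefA α n k) * ((n:ℝ)+1+k) := by
      have h := mul_le_mul_of_nonneg_left hquad hA.le
      nlinarith [hrec, h]
    have h4 := le_of_mul_le_mul_right h3 hDpos
    linarith
  have htel : ∀ m : ℕ, ((1+α)/2) * (∑ i ∈ Finset.range m, coefA α n (i + K₀)) ≤
      (K₀:ℝ) * coefA α n K₀ - ((K₀:ℝ)+m) * coefA α n (K₀+m) := by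
    intro m
    induction m with
    | zero => simp
    | succ m ih =>
      rw [Finset.sum_range_succ, mul_add]
      have hkey := key (K₀+m) (Nat.le_add_right _ _)
      have he : m + K₀ = K₀ + m := Nat.add_comm _ _
      rw [he, ← Nat.add_assoc]
      push_cast at hkey ih ⊢
      linarith
  have hbdd : ∀ m : ℕ, (∑ i ∈ Finset.range m, coefA α n (i + K₀)) ≤
      (K₀:ℝ) * coefA α n K₀ / ((1+α)/2) := by
    intro m
    have h := htel m
    have hA := coefA_pos hα1 hα2 hn (K₀+m)
    have hKm : (0:ℝ) ≤ ((K₀:ℝ)+m) := by positivity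
    rw [le_div_iff₀ (by linarith : (0:ℝ) < (1+α)/2)]
    nlinarith
  have hsum : Summable (fun i => coefA α n (i + K₀)) :=
    summable_of_sum_range_le (fun i => (coefA_pos hα1 hα2 hn _).le) hbdd
  exact (summable_nat_add_iff K₀).mp hsum

lemma coefA_not_summable_mul (hα1 : -1 < α) (hα2 : α < 0) (hn : 0 < n) :
    ¬ Summable (fun k : ℕ => (k:ℝ) * coefA α n k) := by
  set K₁ : ℕ := ⌈(2*(n:ℝ)+4)/(-α)⌉₊ + (n+1) with hK₁
  have hα0 : (0:ℝ) < -α := by linarith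
  have hn0 : (1:ℝ) ≤ n := by exact_mod_cast hn
  have hratio : ∀ k : ℕ, K₁ ≤ k →
      coefA α n k * ((k:ℝ)+1) ≤ coefA α n (k+1) * ((k:ℝ)+3) := by
    intro k hk
    have hA := coefA_pos hα1 hα2 hn k
    have hrec := coefA_succ hα1 hα2 hn k
    have hk1 : (2*(n:ℝ)+4)/(-α) ≤ (k:ℝ) := by
      refine le_trans (Nat.le_ceil _) (Nat.cast_le.mpr ?_)
      exact Nat.le_of_add_right_le hk
    have hk2 : (n:ℝ)+1 ≤ (k:ℝ) := by
      have : n + 1 ≤ k := le_trans (Nat.le_add_left _ _) hk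
      exact_mod_cast this
    have hk1' : 2*(n:ℝ)+4 ≤ (-α) * k := by
      rw [div_le_iff₀ hα0] at hk1; linarith
    have hk0 : (0:ℝ) ≤ k := Nat.cast_nonneg k
    have hcubic : ((k:ℝ)+1) * (((n:ℝ)+1+k) * ((k:ℝ)+1)) ≤
        (-α/2 + k) * ((n:ℝ) - α/2 + k) * ((k:ℝ)+3) := by
      nlinarith [mul_le_mul_of_nonneg_left hk1' hk0, sq_nonneg ((k:ℝ)), hk2, hn0,
        mul_nonneg (mul_nonneg hα0.le hk0) hk0]
    have hmul : (0:ℝ) < ((n:ℝ)+1+k) * ((k:ℝ)+1) := by nlinarith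
    refine le_of_mul_le_mul_right ?_ hmul
    calc coefA α n k * ((k:ℝ)+1) * (((n:ℝ)+1+k) * ((k:ℝ)+1))
        = coefA α n k * (((k:ℝ)+1) * (((n:ℝ)+1+k) * ((k:ℝ)+1))) := by ring
      _ ≤ coefA α n k * ((-α/2 + k) * ((n:ℝ) - α/2 + k) * ((k:ℝ)+3)) :=
          mul_le_mul_of_nonneg_left hcubic hA.le
      _ = coefA α n k * ((-α/2 + k) * ((n:ℝ) - α/2 + k)) * ((k:ℝ)+3) := by ring
      _ = coefA α n (k+1) * (((n:ℝ) + 1 + k) * ((k:ℝ)+1)) * ((k:ℝ)+3) := by rw [hrec]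
      _ = coefA α n (k+1) * ((k:ℝ)+3) * (((n:ℝ)+1+k) * ((k:ℝ)+1)) := by ring
  -- lower bound A k ≥ C / ((k+1)(k+2)) for k ≥ K₁
  have hC : ∀ m : ℕ, coefA α n K₁ * (((K₁:ℝ)+1) * ((K₁:ℝ)+2)) ≤
      coefA α n (K₁+m) * (((K₁:ℝ)+m+1) * ((K₁:ℝ)+m+2)) := by
    intro m
    induction m with
    | zero => push_cast; apply le_of_eq; ring
    | succ m ih =>
      have hr := hratio (K₁+m) (Nat.le_add_right _ _)
      rw [← Nat.add_assoc]
      push_cast at hr ih ⊢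
      have h2 : (0:ℝ) ≤ (K₁:ℝ)+m+2 := by positivity
      nlinarith [mul_le_mul_of_nonneg_right hr h2]
  intro hS
  -- derive summability of harmonic-type series
  have hSsh : Summable (fun m : ℕ => ((K₁+m:ℕ):ℝ) * coefA α n (K₁+m)) := by
    have := (summable_nat_add_iff (f := fun k => (k:ℝ) * coefA α n k) K₁).mpr hS
    simpa [Nat.add_comm] using this
  set C : ℝ := coefA α n K₁ * (((K₁:ℝ)+1) * ((K₁:ℝ)+2)) with hCdef
  have hCpos : 0 < C := by
    have := coefA_pos hα1 hα2 hn K₁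
    positivity
  have hharm : Summable (fun m : ℕ => C/3 * (1/((K₁:ℝ)+m+2))) := by
    apply hSsh.of_nonneg_of_le (fun m => by positivity)
    intro m
    have hc := hC m
    have hKm1 : (0:ℝ) < (K₁:ℝ)+m+1 := by positivity
    have hKm2 : (0:ℝ) < (K₁:ℝ)+m+2 := by positivity
    have hApos := coefA_pos hα1 hα2 hn (K₁+m)
    -- k A k ≥ C k /((k+1)(k+2)) ≥ (C/3) / (k+2)  for k = K₁+m ≥ 1
    have hkge1 : (1:ℝ) ≤ (K₁:ℝ)+m := by
      have : 1 ≤ K₁ := by omega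
      have h1 : (1:ℝ) ≤ (K₁:ℝ) := by exact_mod_cast this
      have : (0:ℝ) ≤ (m:ℝ) := Nat.cast_nonneg m
      linarith
    have hcast : ((K₁+m:ℕ):ℝ) = (K₁:ℝ)+m := by push_cast; ring
    rw [hcast]
    have hgoal : C/3 * (1/((K₁:ℝ)+m+2)) = C/(3*((K₁:ℝ)+m+2)) := by rw [mul_one_div, div_div]
    rw [hgoal, div_le_iff₀ (by positivity : (0:ℝ) < 3*((K₁:ℝ)+m+2))]
    nlinarith [hc, mul_nonneg (mul_nonneg hApos.le hKm2.le)
      (by linarith : (0:ℝ) ≤ 2*((K₁:ℝ)+m)-1)]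
  -- contradiction with harmonic divergence
  have h1 : Summable (fun m : ℕ => 1/((K₁:ℝ)+m+2)) := by
    have h31 : 3/C*(C/3) = 1 := by field_simp
    have := hharm.mul_left (3/C)
    apply this.congr
    intro m
    rw [← mul_assoc, h31, one_mul]
  have h2 : Summable (fun m : ℕ => 1/((m + (K₁+2) : ℕ):ℝ)) := by
    apply h1.congr
    intro m
    push_cast
    ring_nf
  exact Real.not_summable_one_div_natCast ((summable_nat_add_iff (K₁+2)).mp h2)

section Gdef
variable (A : ℕ → ℝ)

noncomputable def Gf (s : ℝ) : ℝ := ∑' k, A k * s ^ k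
noncomputable def Gd (s : ℝ) : ℝ := ∑' k, A k * ((k:ℝ) * s ^ (k-1))

variable (hA0 : ∀ k, 0 < A k) (hA1 : ∀ k, A k ≤ 1)

include hA0 hA1 in
lemma summable_G {s : ℝ} (hs : |s| < 1) : Summable (fun k => A k * s ^ k) := by
  apply Summable.of_norm
  apply Summable.of_nonneg_of_le (fun k => norm_nonneg _) (fun k => ?_)
    (summable_geometric_of_lt_one (_root_.abs_nonneg s) hs)
  rw [norm_mul, norm_pow]
  calc ‖A k‖ * ‖s‖ ^ k ≤ 1 * ‖s‖ ^ k := by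
        apply mul_le_mul_of_nonneg_right _ (by positivity)
        rw [Real.norm_eq_abs, _root_.abs_of_pos (hA0 k)]; exact hA1 k
    _ = |s| ^ k := by rw [one_mul, Real.norm_eq_abs]

lemma summable_aux {r : ℝ} (hr0 : 0 ≤ r) (hr : r < 1) :
    Summable (fun k : ℕ => (k:ℝ) * r ^ (k-1)) := by
  rw [← summable_nat_add_iff 1]
  have h1 : Summable (fun k : ℕ => (k:ℝ) * r ^ k) := by
    simpa using summable_pow_mul_geometric_of_norm_lt_one 1
      (by rwa [Real.norm_eq_abs, _root_.abs_of_nonneg hr0] : ‖r‖ < 1)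
  have h2 : Summable (fun k : ℕ => r ^ k) :=
    summable_geometric_of_lt_one hr0 hr
  apply (h1.add h2).congr
  intro k
  simp only [Nat.add_sub_cancel]
  push_cast
  ring

include hA0 hA1 in
lemma summable_Gd {s : ℝ} (hs : |s| < 1) :
    Summable (fun k => A k * ((k:ℝ) * s ^ (k-1))) := by
  apply Summable.of_norm
  apply Summable.of_nonneg_of_le (fun k => norm_nonneg _) (fun k => ?_)
    (summable_aux (_root_.abs_nonneg s) hs)
  rw [norm_mul, norm_mul, norm_pow]
  have hAk : ‖A k‖ ≤ 1 := by rw [Real.norm_eq_abs, _root_.abs_of_pos (hA0 k)]; exact hA1 k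
  have : ‖(k:ℝ)‖ = (k:ℝ) := by simp
  rw [this, Real.norm_eq_abs]
  calc ‖A k‖ * ((k:ℝ) * |s| ^ (k-1)) ≤ 1 * ((k:ℝ) * |s| ^ (k-1)) := by
        apply mul_le_mul_of_nonneg_right hAk (by positivity)
    _ = (k:ℝ) * |s| ^ (k-1) := one_mul _

include hA0 hA1 in
lemma hasDerivAt_G {s : ℝ} (hs : |s| < 1) : HasDerivAt (Gf A) (Gd A s) s := by
  set r : ℝ := (1 + |s|)/2 with hrdef
  have hsr : |s| < r := by rw [hrdef]; linarith
  have hr0 : 0 ≤ r := le_trans (_root_.abs_nonneg s) hsr.le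
  have hr1 : r < 1 := by rw [hrdef]; linarith
  have hr0' : 0 < r := lt_of_le_of_lt (_root_.abs_nonneg s) hsr
  have h0mem : (0:ℝ) ∈ Ioo (-r) r := by constructor <;> [linarith; linarith]
  have hbound : ∀ (k : ℕ) (y : ℝ), y ∈ Ioo (-r) r →
      ‖A k * ((k:ℝ) * y ^ (k-1))‖ ≤ (k:ℝ) * r ^ (k-1) := by
    intro k y hy
    rw [norm_mul, norm_mul, norm_pow]
    have hAk : ‖A k‖ ≤ 1 := by rw [Real.norm_eq_abs, _root_.abs_of_pos (hA0 k)]; exact hA1 k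
    have hyk : ‖y‖ ≤ r := by
      rw [Real.norm_eq_abs]; rw [mem_Ioo, ← abs_lt] at hy; exact hy.le
    have h1 : ‖y‖ ^ (k-1) ≤ r ^ (k-1) := pow_le_pow_left₀ (norm_nonneg y) hyk _
    have h2 : ‖(k:ℝ)‖ = (k:ℝ) := by simp
    calc ‖A k‖ * (‖(k:ℝ)‖ * ‖y‖^(k-1)) ≤ 1 * (‖(k:ℝ)‖ * r^(k-1)) := by
          apply mul_le_mul hAk _ (by positivity) zero_le_one
          exact mul_le_mul_of_nonneg_left h1 (norm_nonneg _)
      _ = (k:ℝ) * r ^ (k-1) := by rw [one_mul, h2]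
  exact hasDerivAt_tsum_of_isPreconnected (u := fun k : ℕ => (k:ℝ) * r ^ (k-1))
    (summable_aux hr0 hr1) isOpen_Ioo (isPreconnected_Ioo (a := -r) (b := r))
    (fun k y _ => (hasDerivAt_pow k y).const_mul (A k))
    hbound h0mem (summable_G A hA0 hA1 (by simp : |(0:ℝ)| < 1))
    (by rwa [mem_Ioo, ← abs_lt])

include hA0 hA1 in
lemma G_nonneg {s : ℝ} (hs0 : 0 ≤ s) (hs : |s| < 1) : 0 ≤ Gf A s :=
  tsum_nonneg (fun k => mul_nonneg (hA0 k).le (pow_nonneg hs0 k))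

include hA0 in
lemma Gd_nonneg {s : ℝ} (hs0 : 0 ≤ s) : 0 ≤ Gd A s :=
  tsum_nonneg (fun k => mul_nonneg (hA0 k).le (mul_nonneg (Nat.cast_nonneg k) (pow_nonneg hs0 _)))

include hA0 hA1 in
lemma G_le (hS : Summable A) {s : ℝ} (hs0 : 0 ≤ s) (hs : |s| < 1) : Gf A s ≤ ∑' k, A k := by
  apply Summable.tsum_le_tsum _ (summable_G A hA0 hA1 hs) hS
  intro k
  calc A k * s ^ k ≤ A k * 1 := by
        apply mul_le_mul_of_nonneg_left _ (hA0 k).le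
        exact pow_le_one₀ hs0 (le_of_lt (by rwa [_root_.abs_of_nonneg hs0] at hs : s < 1))
    _ = A k := mul_one _

include hA0 hA1 in
lemma Gd_tendsto (hdiv : ¬ Summable (fun k : ℕ => (k:ℝ) * A k)) :
    Tendsto (Gd A) (nhdsWithin 1 (Set.Iio 1)) atTop := by
  rw [tendsto_atTop]
  intro M
  have hnn : ∀ k : ℕ, 0 ≤ (k:ℝ) * A k := fun k => mul_nonneg (Nat.cast_nonneg _) (hA0 k).le
  have hps : Tendsto (fun N => ∑ k ∈ Finset.range N, (k:ℝ) * A k) atTop atTop :=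
    (not_summable_iff_tendsto_nat_atTop_of_nonneg hnn).mp hdiv
  obtain ⟨N, hN⟩ := (tendsto_atTop.mp hps (M+1)).exists
  -- the partial sum function
  set φ : ℝ → ℝ := fun s => ∑ k ∈ Finset.range N, A k * ((k:ℝ) * s ^ (k-1)) with hφ
  have hφc : ContinuousAt φ 1 := by
    apply Continuous.continuousAt
    fun_prop
  have hφ1 : φ 1 = ∑ k ∈ Finset.range N, (k:ℝ) * A k := by
    simp [hφ]; apply Finset.sum_congr rfl; intro k _; ring
  have hev1 : ∀ᶠ s in nhdsWithin 1 (Set.Iio 1), M < φ s := by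
    apply eventually_nhdsWithin_of_eventually_nhds
    exact hφc.eventually (eventually_gt_nhds (by rw [hφ1]; linarith : M < φ 1))
  have hev0 : ∀ᶠ s in nhdsWithin 1 (Set.Iio 1), (0:ℝ) < s := by
    apply eventually_nhdsWithin_of_eventually_nhds
    exact eventually_gt_nhds one_pos
  have hev2 : ∀ᶠ s in nhdsWithin (1:ℝ) (Set.Iio 1), s < 1 := eventually_mem_nhdsWithin
  filter_upwards [hev1, hev0, hev2] with s hφs hs0 hs1
  have habs : |s| < 1 := by rw [_root_.abs_of_pos hs0]; exact hs1
  have : φ s ≤ Gd A s := by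
    apply Summable.sum_le_tsum (Finset.range N) (fun k _ => ?_) (summable_Gd A hA0 hA1 habs)
    exact mul_nonneg (hA0 k).le (mul_nonneg (Nat.cast_nonneg k) (pow_nonneg hs0.le _))
  linarith

end Gdef

section FD
variable (gg gd : ℝ → ℝ) (n : ℕ)

lemma hasFDerivAt_normSq (z : ℂ) :
    HasFDerivAt Complex.normSq
      ((2*z.re) • Complex.reCLM + (2*z.im) • Complex.imCLM : ℂ →L[ℝ] ℝ) z := by
  have h1 := (Complex.reCLM.hasFDerivAt (x := z)).mul (Complex.reCLM.hasFDerivAt (x := z))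
  have h2 := (Complex.imCLM.hasFDerivAt (x := z)).mul (Complex.imCLM.hasFDerivAt (x := z))
  have h3 := h1.add h2
  have hfun : (Complex.normSq : ℂ → ℝ) =
      fun w => Complex.reCLM w * Complex.reCLM w + Complex.imCLM w * Complex.imCLM w := by
    funext w; simp [Complex.normSq_apply]
  rw [hfun]
  refine h3.congr_fderiv ?_
  ext v
  simp [Complex.normSq_apply]
  ring

lemma hasFDerivAt_main (hG : HasDerivAt gg (gd (Complex.normSq z)) (Complex.normSq z)) :
    HasFDerivAt (fun w : ℂ => (↑(gg (Complex.normSq w)) : ℂ) * w ^ n)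
      ((↑(gg (Complex.normSq z)) : ℂ) •
          (ContinuousLinearMap.smulRight (1 : ℂ →L[ℂ] ℂ)
            ((n:ℂ) * z ^ (n-1))).restrictScalars ℝ +
        (z ^ n) • (Complex.ofRealCLM.comp
          ((gd (Complex.normSq z)) • ((2*z.re) • Complex.reCLM + (2*z.im) • Complex.imCLM)))) z := by
  have h1 : HasFDerivAt (fun w : ℂ => gg (Complex.normSq w))
      ((gd (Complex.normSq z)) • ((2*z.re) • Complex.reCLM + (2*z.im) • Complex.imCLM)) z :=
    hG.comp_hasFDerivAt z (hasFDerivAt_normSq z)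
  have h2 : HasFDerivAt (fun w : ℂ => (↑(gg (Complex.normSq w)) : ℂ))
      (Complex.ofRealCLM.comp
        ((gd (Complex.normSq z)) • ((2*z.re) • Complex.reCLM + (2*z.im) • Complex.imCLM))) z :=
    Complex.ofRealCLM.hasFDerivAt.comp z h1
  have h3 : HasFDerivAt (fun w : ℂ => w ^ n)
      ((ContinuousLinearMap.smulRight (1 : ℂ →L[ℂ] ℂ) ((n:ℂ) * z ^ (n-1))).restrictScalars ℝ) z :=
    ((hasDerivAt_pow n z).hasFDerivAt).restrictScalars ℝ
  exact h2.mul h3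

lemma fderiv_main_apply (hG : HasDerivAt gg (gd (Complex.normSq z)) (Complex.normSq z)) (v : ℂ) :
    fderiv ℝ (fun w : ℂ => (↑(gg (Complex.normSq w)) : ℂ) * w ^ n) z v =
      (↑(gg (Complex.normSq z)) : ℂ) * (v * ((n:ℂ) * z ^ (n-1))) +
        z ^ n * ↑(gd (Complex.normSq z) * (2*z.re*v.re + 2*z.im*v.im)) := by
  rw [(hasFDerivAt_main gg gd n hG).fderiv]
  simp [ContinuousLinearMap.smulRight_apply, smul_eq_mul]
  push_cast
  ring

lemma pderivZ_main (hn : 0 < n) (hG : HasDerivAt gg (gd (Complex.normSq z)) (Complex.normSq z)) :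
    pderivZ (fun w : ℂ => (↑(gg (Complex.normSq w)) : ℂ) * w ^ n) z =
      ↑(gd (Complex.normSq z) * Complex.normSq z + n * gg (Complex.normSq z)) * z ^ (n-1) := by
  obtain ⟨m, rfl⟩ : ∃ m, n = m + 1 := ⟨n - 1, by omega⟩
  unfold pderivZ
  rw [fderiv_main_apply gg gd _ hG, fderiv_main_apply gg gd _ hG]
  simp only [Complex.one_re, Complex.one_im, Complex.I_re, Complex.I_im, Nat.add_sub_cancel,
    mul_one, mul_zero, add_zero, zero_add, one_mul]
  have key : z * ((z.re:ℂ) - (z.im:ℂ) * Complex.I) = ((Complex.normSq z : ℝ) : ℂ) := by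
    simp [Complex.ext_iff, Complex.normSq_apply]; ring
  rw [pow_succ]
  push_cast
  linear_combination ((gd (Complex.normSq z) : ℂ) * z^m) * key -
    ((gg (Complex.normSq z) : ℂ) * ((m:ℂ)+1) * z^m)/2 * Complex.I_sq

lemma pderivZbar_main (hn : 0 < n) (hG : HasDerivAt gg (gd (Complex.normSq z)) (Complex.normSq z)) :
    pderivZbar (fun w : ℂ => (↑(gg (Complex.normSq w)) : ℂ) * w ^ n) z =
      ↑(gd (Complex.normSq z)) * z ^ (n+1) := by
  obtain ⟨m, rfl⟩ : ∃ m, n = m + 1 := ⟨n - 1, by omega⟩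
  unfold pderivZbar
  rw [fderiv_main_apply gg gd _ hG, fderiv_main_apply gg gd _ hG]
  simp only [Complex.one_re, Complex.one_im, Complex.I_re, Complex.I_im, Nat.add_sub_cancel,
    mul_one, mul_zero, add_zero, zero_add, one_mul]
  have hz : (z.re : ℂ) + (z.im:ℂ) * Complex.I = z := Complex.re_add_im z
  rw [pow_succ, pow_succ]
  push_cast
  linear_combination ((gd (Complex.normSq z) : ℂ) * z^m * z) * hz +
    ((gg (Complex.normSq z) : ℂ) * ((m:ℂ)+1) * z^m)/2 * Complex.I_sq

end FD


section Bridge17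
variable {α : ℝ} {n : ℕ}

noncomputable def stP (α : ℝ) (n : ℕ) (r : ℝ) : ℝ :=
  (Gd (coefA α n) (r^2) * r^2 + (n:ℝ) * Gf (coefA α n) (r^2)) * r^(n-1)

noncomputable def stQ (α : ℝ) (n : ℕ) (r : ℝ) : ℝ :=
  Gd (coefA α n) (r^2) * r^(n+1)

lemma exF_eq {z : ℂ} :
    exF α n z = ((Gf (coefA α n) (Complex.normSq z) : ℝ) : ℂ) * z ^ n := by
  unfold exF
  rw [tsum_mul_right]
  congr 1
  have h : (fun k : ℕ => ((coefA α n k * ‖z‖ ^ (2*k) : ℝ) : ℂ)) =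
      fun k : ℕ => ((coefA α n k * (Complex.normSq z)^k : ℝ) : ℂ) := by
    funext k; rw [pow_mul, Complex.sq_norm]
  rw [h, Gf, Complex.ofReal_tsum]

lemma st17_pderiv (hα1 : -1 < α) (hα2 : α < 0) (hn : 0 < n) {z : ℂ}
    (hz1 : ‖z‖ < 1) :
    pderivZ (exF α n) z = ((Gd (coefA α n) (Complex.normSq z) * Complex.normSq z
        + (n:ℝ) * Gf (coefA α n) (Complex.normSq z) : ℝ) : ℂ) * z ^ (n-1) ∧
    pderivZbar (exF α n) z = ((Gd (coefA α n) (Complex.normSq z) : ℝ) : ℂ) * z ^ (n+1) := by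
  have hA0 := coefA_pos hα1 hα2 hn
  have hA1 := coefA_le_one hα1 hα2 hn
  have habs := norm_nonneg z
  have hw1 : |Complex.normSq z| < 1 := by
    rw [_root_.abs_of_nonneg (Complex.normSq_nonneg z), ← Complex.sq_norm]
    nlinarith
  have hG := hasDerivAt_G (coefA α n) hA0 hA1 hw1
  have hfun : exF α n = fun w => ((Gf (coefA α n) (Complex.normSq w) : ℝ) : ℂ) * w ^ n :=
    funext fun w => exF_eq
  rw [hfun]
  exact ⟨pderivZ_main _ _ n hn hG, pderivZbar_main _ _ n hn hG⟩

lemma st17_formulas (hα1 : -1 < α) (hα2 : α < 0) (hn : 0 < n) {z : ℂ}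
    (hz0 : 0 < ‖z‖) (hz1 : ‖z‖ < 1) :
    Dnorm (exF α n) z = stP α n (‖z‖) + stQ α n (‖z‖) ∧
    jacobian (exF α n) z = stP α n (‖z‖)^2 - stQ α n (‖z‖)^2 := by
  have hA0 := coefA_pos hα1 hα2 hn
  have hA1 := coefA_le_one hα1 hα2 hn
  obtain ⟨hp, hq⟩ := st17_pderiv hα1 hα2 hn hz1
  have hw : Complex.normSq z = ‖z‖ ^ 2 := (Complex.sq_norm z).symm
  have hr2 : (0:ℝ) ≤ ‖z‖ ^ 2 := sq_nonneg _
  have hr21 : |‖z‖ ^ 2| < 1 := by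
    rw [_root_.abs_of_nonneg hr2]; nlinarith
  have hGd0 : 0 ≤ Gd (coefA α n) (‖z‖ ^ 2) := Gd_nonneg _ hA0 hr2
  have hG0 : 0 ≤ Gf (coefA α n) (‖z‖ ^ 2) := G_nonneg _ hA0 hA1 hr2 hr21
  have hp' : ‖pderivZ (exF α n) z‖ = stP α n (‖z‖) := by
    rw [hp, norm_mul, norm_pow, Complex.norm_real, Real.norm_eq_abs, hw]
    unfold stP
    rw [_root_.abs_of_nonneg (add_nonneg (mul_nonneg hGd0 hr2) (mul_nonneg (Nat.cast_nonneg n) hG0))]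
  have hq' : ‖pderivZbar (exF α n) z‖ = stQ α n (‖z‖) := by
    rw [hq, norm_mul, norm_pow, Complex.norm_real, Real.norm_eq_abs, hw]
    unfold stQ
    rw [_root_.abs_of_nonneg hGd0]
  constructor
  · unfold Dnorm; rw [hp', hq']
  · unfold jacobian; rw [hp', hq']

lemma st17_tendstoE (hα1 : -1 < α) (hα2 : α < 0) (hn : 0 < n) {K : ℝ} (hK : 1 ≤ K) :
    Filter.Tendsto (fun r => (stP α n r + stQ α n r)^2 - K * ((stP α n r)^2 - (stQ α n r)^2))
      (nhdsWithin (1:ℝ) (Set.Iio 1)) Filter.atTop := by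
  have hA0 := coefA_pos hα1 hα2 hn
  have hA1 := coefA_le_one hα1 hα2 hn
  have hSum := coefA_summable hα1 hα2 hn
  have hdiv := coefA_not_summable_mul hα1 hα2 hn
  have hS0 : 0 ≤ ∑' k, coefA α n k := tsum_nonneg (fun k => (hA0 k).le)
  have hIoo : ∀ᶠ r in nhdsWithin (1:ℝ) (Set.Iio 1), r ∈ Set.Ioo (0:ℝ) 1 := by
    have h1 : ∀ᶠ r in nhdsWithin (1:ℝ) (Set.Iio 1), (0:ℝ) < r :=
      eventually_nhdsWithin_of_eventually_nhds (eventually_gt_nhds one_pos)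
    have h2 : ∀ᶠ r in nhdsWithin (1:ℝ) (Set.Iio 1), r < 1 := eventually_mem_nhdsWithin
    filter_upwards [h1, h2] with r hr1 hr2
    exact ⟨hr1, hr2⟩
  have hhalf : ∀ᶠ r in nhdsWithin (1:ℝ) (Set.Iio 1), (1/2:ℝ) < r :=
    eventually_nhdsWithin_of_eventually_nhds (eventually_gt_nhds (by norm_num))
  -- facts valid on Ioo 0 1
  have hfacts : ∀ r ∈ Set.Ioo (0:ℝ) 1, 0 ≤ stP α n r ∧ 0 ≤ stQ α n r ∧
      stP α n r - stQ α n r = (n:ℝ) * Gf (coefA α n) (r^2) * r^(n-1) ∧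
      stP α n r - stQ α n r ≤ (n:ℝ) * ∑' k, coefA α n k ∧
      0 ≤ stP α n r - stQ α n r := by
    intro r hr
    have hr2 : (0:ℝ) ≤ r^2 := sq_nonneg r
    have hr21 : |r^2| < 1 := by rw [_root_.abs_of_nonneg hr2]; nlinarith [hr.1, hr.2]
    have hGd0 : 0 ≤ Gd (coefA α n) (r^2) := Gd_nonneg _ hA0 hr2
    have hG0 : 0 ≤ Gf (coefA α n) (r^2) := G_nonneg _ hA0 hA1 hr2 hr21
    have hGS : Gf (coefA α n) (r^2) ≤ ∑' k, coefA α n k := G_le _ hA0 hA1 hSum hr2 hr21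
    have hrp0 : (0:ℝ) ≤ r^(n-1) := pow_nonneg hr.1.le _
    have hrp1 : r^(n-1) ≤ 1 := pow_le_one₀ hr.1.le hr.2.le
    have hexp : r^(n+1) = r^(n-1) * r^2 := by
      rw [← pow_add]; congr 1; omega
    refine ⟨?_, ?_, ?_, ?_, ?_⟩
    · unfold stP
      exact mul_nonneg (add_nonneg (mul_nonneg hGd0 hr2)
        (mul_nonneg (Nat.cast_nonneg n) hG0)) hrp0
    · unfold stQ
      exact mul_nonneg hGd0 (pow_nonneg hr.1.le _)
    · unfold stP stQ; rw [hexp]; ring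
    · unfold stP stQ; rw [hexp]
      have h1 : Gf (coefA α n) (r^2) * r^(n-1) ≤ (∑' k, coefA α n k) * 1 :=
        mul_le_mul hGS hrp1 hrp0 hS0
      have hn0 : (0:ℝ) ≤ (n:ℝ) := Nat.cast_nonneg n
      nlinarith [mul_le_mul_of_nonneg_left h1 hn0]
    · unfold stP stQ; rw [hexp]
      have : 0 ≤ (n:ℝ) * Gf (coefA α n) (r^2) * r^(n-1) := by positivity
      nlinarith [this]
  have hsq : Filter.Tendsto (fun r : ℝ => r^2) (nhdsWithin (1:ℝ) (Set.Iio 1))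
      (nhdsWithin (1:ℝ) (Set.Iio 1)) := by
    apply tendsto_nhdsWithin_of_tendsto_nhds_of_eventually_within
    · have h := ((continuous_pow 2).tendsto (1:ℝ)).mono_left
        (nhdsWithin_le_nhds (s := Set.Iio 1))
      simpa using h
    · filter_upwards [hIoo] with r hr
      simp only [Set.mem_Iio]
      nlinarith [hr.1, hr.2]
  have hGdr : Filter.Tendsto (fun r : ℝ => Gd (coefA α n) (r^2))
      (nhdsWithin (1:ℝ) (Set.Iio 1)) Filter.atTop :=
    (Gd_tendsto (coefA α n) hA0 hA1 hdiv).comp hsq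
  have hQ : Filter.Tendsto (stQ α n) (nhdsWithin (1:ℝ) (Set.Iio 1)) Filter.atTop := by
    apply Filter.tendsto_atTop_mono' _ _
      (hGdr.atTop_mul_const (show (0:ℝ) < (1/2)^(n+1) by positivity))
    filter_upwards [hIoo, hhalf] with r hr hhr
    have h1 : ((1:ℝ)/2)^(n+1) ≤ r^(n+1) := pow_le_pow_left₀ (by norm_num) hhr.le _
    have hGd0 : 0 ≤ Gd (coefA α n) (r^2) := Gd_nonneg _ hA0 (sq_nonneg r)
    exact mul_le_mul_of_nonneg_left h1 hGd0
  have hT : Filter.Tendsto (fun r => stP α n r + stQ α n r)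
      (nhdsWithin (1:ℝ) (Set.Iio 1)) Filter.atTop := by
    apply Filter.tendsto_atTop_mono' _ _ hQ
    filter_upwards [hIoo] with r hr
    linarith [(hfacts r hr).1]
  apply Filter.tendsto_atTop_mono' _ _ hT
  filter_upwards [hIoo, hT.eventually_ge_atTop (K*((n:ℝ) * ∑' k, coefA α n k) + 1)]
    with r hr hTr
  obtain ⟨hP0, hQ0, -, hdS, hd0⟩ := hfacts r hr
  have hKnn : 0 ≤ K := by linarith
  have h1 : K * (stP α n r - stQ α n r) ≤ K * ((n:ℝ) * ∑' k, coefA α n k) :=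
    mul_le_mul_of_nonneg_left hdS hKnn
  have hKnS : 0 ≤ K * ((n:ℝ) * ∑' k, coefA α n k) := by positivity
  nlinarith [hTr, h1, hP0, hQ0]

end Bridge17

end Aux17

/-- For `α ∈ (-1,0)`, `n ≥ 1`, and `f(z) = Σ_k a_{n,k}|z|^{2k} z^n`: for
every `K ≥ 1` the quantity `‖D_f(z)‖² - K J_f(z)` tends to `+∞` as `|z| → 1⁻`; in particular
for all `K ≥ 1`, `K' ≥ 0` there is `z ∈ D` with `‖D_f(z)‖² > K J_f(z) + K'`, so `f` is not a
`(K,K')`-elliptic mapping for any `K ≥ 1`, `K' ≥ 0`. -/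
theorem stmt17 (α : ℝ) (hα1 : -1 < α) (hα2 : α < 0) (n : ℕ) (hn : 0 < n) :
    (∀ K : ℝ, 1 ≤ K →
      Filter.Tendsto (fun z : ℂ => Dnorm (exF α n) z ^ 2 - K * jacobian (exF α n) z)
        (Filter.comap (fun z : ℂ => ‖z‖) (nhdsWithin 1 (Set.Iio 1)))
        Filter.atTop) ∧
    (∀ K K' : ℝ, 1 ≤ K → 0 ≤ K' →
      ∃ z ∈ unitDisk, K * jacobian (exF α n) z + K' < Dnorm (exF α n) z ^ 2) ∧
    (∀ K K' : ℝ, 1 ≤ K → 0 ≤ K' → ¬ IsElliptic K K' (exF α n)) := by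
  have hIooMem : (Set.Ioo (0:ℝ) 1) ∈ nhdsWithin (1:ℝ) (Set.Iio 1) := by
    rw [← Set.Ioi_inter_Iio]
    exact Filter.inter_mem (nhdsWithin_le_nhds (Ioi_mem_nhds one_pos)) self_mem_nhdsWithin
  have main1 : ∀ K : ℝ, 1 ≤ K →
      Filter.Tendsto (fun z : ℂ => Dnorm (exF α n) z ^ 2 - K * jacobian (exF α n) z)
        (Filter.comap (fun z : ℂ => ‖z‖) (nhdsWithin 1 (Set.Iio 1)))
        Filter.atTop := by
    intro K hK
    have hTE := st17_tendstoE hα1 hα2 hn hK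
    refine Filter.Tendsto.congr' ?_ (hTE.comp Filter.tendsto_comap)
    have hpre : (fun z : ℂ => ‖z‖) ⁻¹' (Set.Ioo 0 1) ∈
        Filter.comap (fun z : ℂ => ‖z‖) (nhdsWithin (1:ℝ) (Set.Iio 1)) :=
      Filter.preimage_mem_comap hIooMem
    filter_upwards [hpre] with z hz
    obtain ⟨hD, hJ⟩ := st17_formulas hα1 hα2 hn hz.1 hz.2
    simp only [Function.comp]
    rw [hD, hJ]
  have hNB : (Filter.comap (fun z : ℂ => ‖z‖)
      (nhdsWithin (1:ℝ) (Set.Iio 1))).NeBot := by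
    apply Filter.comap_neBot
    intro t ht
    obtain ⟨x, hx⟩ := Filter.nonempty_of_mem (Filter.inter_mem ht hIooMem)
    exact ⟨(x:ℂ), by rw [Complex.norm_real, Real.norm_eq_abs, _root_.abs_of_pos hx.2.1]; exact hx.1⟩
  have part2 : ∀ K K' : ℝ, 1 ≤ K → 0 ≤ K' →
      ∃ z ∈ unitDisk, K * jacobian (exF α n) z + K' < Dnorm (exF α n) z ^ 2 := by
    intro K K' hK hK'
    have h1 := (main1 K hK).eventually_gt_atTop K'
    have h2 : ∀ᶠ z in Filter.comap (fun z : ℂ => ‖z‖)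
        (nhdsWithin (1:ℝ) (Set.Iio 1)), ‖z‖ < 1 :=
      Filter.eventually_of_mem (Filter.preimage_mem_comap self_mem_nhdsWithin)
        (fun z hz => hz)
    obtain ⟨z, hzgt, hzlt⟩ := (h1.and h2).exists
    refine ⟨z, ?_, by linarith⟩
    simpa [unitDisk, Metric.mem_ball, Complex.dist_eq] using hzlt
  refine ⟨main1, part2, ?_⟩
  intro K K' hK hK' hEll
  obtain ⟨-, -, hae⟩ := hEll
  have hTE := st17_tendstoE hα1 hα2 hn hK
  have hsmem : {r : ℝ | K' < (stP α n r + stQ α n r)^2 -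
      K * ((stP α n r)^2 - (stQ α n r)^2) ∧ r ∈ Set.Ioo (0:ℝ) 1} ∈
      nhdsWithin (1:ℝ) (Set.Iio 1) := by
    have h1 := hTE.eventually_gt_atTop K'
    have h2 : ∀ᶠ r in nhdsWithin (1:ℝ) (Set.Iio 1), r ∈ Set.Ioo (0:ℝ) 1 :=
      Filter.eventually_of_mem hIooMem (fun r hr => hr)
    exact (h1.and h2)
  rw [mem_nhdsLT_iff_exists_Ioo_subset] at hsmem
  obtain ⟨l, hl, hsub⟩ := hsmem
  rw [Set.mem_Iio] at hl
  set r₀ : ℝ := max l 0 with hr₀def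
  have hr₀0 : 0 ≤ r₀ := le_max_right _ _
  have hr₀1 : r₀ < 1 := max_lt hl one_pos
  set c : ℂ := (((r₀+1)/2 : ℝ) : ℂ) with hcdef
  have hcabs : ‖c‖ = (r₀+1)/2 := by
    rw [hcdef, Complex.norm_real, Real.norm_eq_abs, _root_.abs_of_pos (by linarith)]
  set ε : ℝ := (1-r₀)/4 with hεdef
  have hε : 0 < ε := by rw [hεdef]; linarith
  have hball : ∀ w ∈ Metric.ball c ε, r₀ < ‖w‖ ∧ ‖w‖ < 1 := by
    intro w hw
    rw [Metric.mem_ball, Complex.dist_eq] at hw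
    have h1 : ‖w‖ ≤ ‖c‖ + ‖w - c‖ := by
      calc ‖w‖ = ‖c + (w - c)‖ := by ring_nf
        _ ≤ _ := norm_add_le _ _
    have h2 : ‖c‖ ≤ ‖w‖ + ‖w - c‖ := by
      calc ‖c‖ = ‖w + (c - w)‖ := by ring_nf
        _ ≤ ‖w‖ + ‖c - w‖ := norm_add_le _ _
        _ = ‖w‖ + ‖w - c‖ := by rw [norm_sub_rev]
    rw [hcabs] at h1 h2
    constructor
    · rw [hεdef] at hw; linarith
    · rw [hεdef] at hw; linarith
  have hviol : ∀ w ∈ Metric.ball c ε,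
      ¬ (Dnorm (exF α n) w ^ 2 ≤ K * jacobian (exF α n) w + K') := by
    intro w hw
    obtain ⟨hw1, hw2⟩ := hball w hw
    have hlw : l < ‖w‖ := lt_of_le_of_lt (le_max_left l 0) hw1
    have hs := hsub ⟨hlw, hw2⟩
    obtain ⟨hD, hJ⟩ := st17_formulas hα1 hα2 hn hs.2.1 hs.2.2
    rw [not_le, hD, hJ]
    linarith [hs.1]
  have hmeas0 : (volume.restrict unitDisk) {z : ℂ |
      ¬ (Dnorm (exF α n) z ^ 2 ≤ K * jacobian (exF α n) z + K')} = 0 :=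
    MeasureTheory.ae_iff.mp hae
  have hb0 : (volume.restrict unitDisk) (Metric.ball c ε) = 0 :=
    MeasureTheory.measure_mono_null (fun w hw => hviol w hw) hmeas0
  have hsubdisk : Metric.ball c ε ⊆ unitDisk := by
    intro w hw
    have := (hball w hw).2
    simpa [unitDisk, Metric.mem_ball, Complex.dist_eq] using this
  rw [MeasureTheory.Measure.restrict_apply measurableSet_ball,
    Set.inter_eq_left.mpr hsubdisk] at hb0
  exact absurd hb0 (Metric.measure_ball_pos volume c hε).ne'

end
end
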